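/- Let Y be a nonempty compact subset of ℂ² such that P(Y) has dense invertibles and (0,0) lies in the polynomial hull Ŷ. Then for every a ∈ ℂ there exists a point (z,w) ∈ Y with z = a·w. -/

import Mathlib

open BoundedContinuousFunction Set

noncomputable def pev (q : MvPolynomial (Fin 2) ℂ) (z : ℂ × ℂ) : ℂ :=
  MvPolynomial.eval ![z.1, z.2] q

def bidisk : Set (ℂ × ℂ) := {z : ℂ × ℂ | ‖z.1‖ ≤ 1 ∧ ‖z.2‖ ≤ 1}

def polyHull (Y : Set (ℂ × ℂ)) : Set (ℂ × ℂ) :=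
  {z : ℂ × ℂ | ∀ (q : MvPolynomial (Fin 2) ℂ) (M : ℝ),
    (∀ y ∈ Y, ‖pev q y‖ ≤ M) → ‖pev q z‖ ≤ M}

/-- The subalgebra of `Y →ᵇ ℂ` consisting of restrictions to `Y` of polynomial
functions in the two complex coordinates. -/
noncomputable def polySub (Y : Set (ℂ × ℂ)) : Subalgebra ℂ (Y →ᵇ ℂ) where
  carrier := {f : Y →ᵇ ℂ | ∃ q : MvPolynomial (Fin 2) ℂ, ∀ y : Y, f y = pev q ↑y}
  mul_mem' := by
    rintro f g ⟨q, hq⟩ ⟨r, hr⟩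
    exact ⟨q * r, fun y => by simp [pev, hq y, hr y]⟩
  one_mem' := ⟨1, fun y => by simp [pev]⟩
  add_mem' := by
    rintro f g ⟨q, hq⟩ ⟨r, hr⟩
    exact ⟨q + r, fun y => by simp [pev, hq y, hr y]⟩
  zero_mem' := ⟨0, fun y => by simp [pev]⟩
  algebraMap_mem' := fun c => ⟨MvPolynomial.C c, fun y => by simp [pev]⟩

/-- `P(Y)`: the uniform closure of the polynomial restrictions, as a Banach algebra
(a closed subalgebra of the bounded continuous functions on `Y`). -/
noncomputable def PY (Y : Set (ℂ × ℂ)) : Subalgebra ℂ (Y →ᵇ ℂ) :=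
  (polySub Y).topologicalClosure

lemma pev_eval (a z w : ℂ) :
    pev (MvPolynomial.X 0 - MvPolynomial.C a * MvPolynomial.X 1) (z, w) = z - a * w := by
  simp [pev]

lemma pev_mul (P Q : MvPolynomial (Fin 2) ℂ) (z : ℂ × ℂ) :
    pev (P * Q) z = pev P z * pev Q z := by simp [pev]

lemma pev_sub (P Q : MvPolynomial (Fin 2) ℂ) (z : ℂ × ℂ) :
    pev (P - Q) z = pev P z - pev Q z := by simp [pev]

lemma pev_one (z : ℂ × ℂ) : pev 1 z = 1 := by simp [pev]

set_option maxHeartbeats 1000000 in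
theorem stmt10' (Y : Set (ℂ × ℂ)) (hne : Y.Nonempty) (hcpt : IsCompact Y)
    (hinv : Dense {f : PY Y | IsUnit f})
    (h0 : ((0 : ℂ), (0 : ℂ)) ∈ polyHull Y) :
    ∀ a : ℂ, ∃ y ∈ Y, y.1 = a * y.2 := by
  intro a
  by_contra hcon
  push_neg at hcon
  -- the function z - a w on Y, as a bounded continuous function
  haveI : CompactSpace Y := isCompact_iff_compactSpace.mp hcpt
  set Qa : MvPolynomial (Fin 2) ℂ := MvPolynomial.X 0 - MvPolynomial.C a * MvPolynomial.X 1 with hQa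
  have hcont : Continuous (fun y : Y => (y : ℂ × ℂ).1 - a * (y : ℂ × ℂ).2) := by
    fun_prop
  set F : Y →ᵇ ℂ := BoundedContinuousFunction.mkOfCompact ⟨_, hcont⟩ with hF
  have hFval : ∀ y : Y, F y = (y : ℂ × ℂ).1 - a * (y : ℂ × ℂ).2 := fun y => rfl
  have hFmem : F ∈ polySub Y := ⟨Qa, fun y => by rw [hFval, hQa, ← pev_eval a]⟩
  have hFPY : F ∈ PY Y := (polySub Y).le_topologicalClosure hFmem
  -- δ : the minimum modulus of F on Y
  obtain ⟨y₀, hy₀Y, hy₀'⟩ := hcpt.exists_isMinOn hne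
    (by fun_prop : Continuous (fun z : ℂ × ℂ => ‖z.1 - a * z.2‖)).continuousOn
  have hy₀ : ∀ y ∈ Y, ‖y₀.1 - a * y₀.2‖ ≤ ‖y.1 - a * y.2‖ := fun y hy => hy₀' hy
  set δ : ℝ := ‖y₀.1 - a * y₀.2‖ with hδ
  have hδpos : 0 < δ := by
    rw [hδ, norm_pos_iff, sub_ne_zero]
    exact hcon y₀ hy₀Y
  have hFlb : ∀ y : Y, δ ≤ ‖F y‖ := fun y => hy₀ y y.2
  set C : ℝ := ‖F‖ with hC
  have hδC : δ ≤ C := le_trans (hFlb ⟨y₀, hy₀Y⟩) (F.norm_coe_le_norm _)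
  -- pick an invertible g close to F
  obtain ⟨g, hgu, hgF⟩ := hinv.exists_dist_lt (⟨F, hFPY⟩ : PY Y) (by positivity : (0:ℝ) < δ/4)
  obtain ⟨u, hu⟩ := hgu
  set G : Y →ᵇ ℂ := (g : Y →ᵇ ℂ) with hG
  set H : Y →ᵇ ℂ := ((↑u⁻¹ : PY Y) : Y →ᵇ ℂ) with hH
  have hGH : G * H = 1 := by
    rw [hG, hH, ← hu, ← MulMemClass.coe_mul, ← Units.val_mul, mul_inv_cancel]
    rfl
  have hGF : ‖G - F‖ < δ/4 := by
    have h1 : dist g (⟨F, hFPY⟩ : PY Y) = dist G F := Subtype.dist_eq _ _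
    rw [dist_comm] at hgF
    rw [← dist_eq_norm, ← h1]
    exact hgF
  -- lower bound on |G y| and upper bound on ‖H‖
  have hGlb : ∀ y : Y, 3*δ/4 ≤ ‖G y‖ := by
    intro y
    have h1 : ‖G y - F y‖ ≤ ‖G - F‖ := by
      have := (G - F).norm_coe_le_norm y
      simpa using this
    have h4 := hFlb y
    have h2 : ‖F y‖ ≤ ‖F y - G y‖ + ‖G y‖ := by
      calc ‖F y‖ = ‖(F y - G y) + G y‖ := by rw [sub_add_cancel]
        _ ≤ ‖F y - G y‖ + ‖G y‖ := norm_add_le _ _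
    have h3 : ‖G y - F y‖ = ‖F y - G y‖ := norm_sub_rev _ _
    linarith
  have hHbd : ‖H‖ ≤ 4/(3*δ) := by
    apply BoundedContinuousFunction.norm_le (by positivity) |>.mpr
    intro y
    have h1 : G y * H y = 1 := by
      have : (G * H) y = (1 : Y →ᵇ ℂ) y := by rw [hGH]
      simpa using this
    have h2 : ‖G y‖ * ‖H y‖ = 1 := by rw [← norm_mul, h1, norm_one]
    have h3 := hGlb y
    rw [le_div_iff₀ (by positivity : (0:ℝ) < 3*δ)]
    nlinarith [mul_le_mul_of_nonneg_right h3 (norm_nonneg (H y)), norm_nonneg (H y)]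
  -- approximate G and H by polynomial restrictions
  set K : ℝ := 2*C + 4/(3*δ) + 5*δ/16 + 1 with hK
  have hKpos : 0 < K := by positivity
  set ε : ℝ := min (δ/16) (1/(4*K)) with hε
  have hεpos : 0 < ε := lt_min (by positivity) (by positivity)
  have hgcl : G ∈ closure (polySub Y : Set (Y →ᵇ ℂ)) := g.2
  have hhcl : H ∈ closure (polySub Y : Set (Y →ᵇ ℂ)) := (↑u⁻¹ : PY Y).2
  obtain ⟨p, hpmem, hpG⟩ := Metric.mem_closure_iff.mp hgcl ε hεpos
  obtain ⟨q, hqmem, hqH⟩ := Metric.mem_closure_iff.mp hhcl ε hεpos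
  obtain ⟨P, hP⟩ := hpmem
  obtain ⟨Q, hQ⟩ := hqmem
  rw [dist_comm, dist_eq_norm] at hpG hqH
  -- evaluations at the origin
  set p0 : ℂ := pev P (0, 0) with hp0
  set q0 : ℂ := pev Q (0, 0) with hq0
  -- hull estimates
  have hA1 : ‖p0‖ ≤ ‖p - F‖ := by
    have := h0 (P - Qa) ‖p - F‖ ?_
    · rwa [pev_sub, hQa, pev_eval, mul_zero, sub_zero, sub_zero] at this
    · intro y hy
      rw [pev_sub]
      have h1 : pev P y = p ⟨y, hy⟩ := (hP ⟨y, hy⟩).symm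
      have h2 : pev Qa y = F ⟨y, hy⟩ := by
        rw [hFval, hQa]
        rcases y with ⟨z, w⟩
        exact pev_eval a z w
      rw [h1, h2]
      simpa using (p - F).norm_coe_le_norm ⟨y, hy⟩
  have hA2 : ‖q0‖ ≤ ‖q‖ := by
    apply h0 Q ‖q‖
    intro y hy
    have h1 : pev Q y = q ⟨y, hy⟩ := (hQ ⟨y, hy⟩).symm
    rw [h1]
    exact q.norm_coe_le_norm _
  have hA3 : ‖p0 * q0 - 1‖ ≤ ‖p * q - G * H‖ := by
    have := h0 (P * Q - 1) ‖p * q - G * H‖ ?_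
    · rwa [pev_sub, pev_mul, pev_one, ← hp0, ← hq0] at this
    · intro y hy
      rw [pev_sub, pev_mul, pev_one]
      have e1 : pev P y = p ⟨y, hy⟩ := (hP ⟨y, hy⟩).symm
      have e2 : pev Q y = q ⟨y, hy⟩ := (hQ ⟨y, hy⟩).symm
      rw [e1, e2]
      have h1' : G ⟨y, hy⟩ * H ⟨y, hy⟩ = 1 := by
        have h1 : (G * H) ⟨y, hy⟩ = (1 : ↥Y →ᵇ ℂ) ⟨y, hy⟩ := by rw [hGH]
        simpa using h1
      have h2 : (p * q - G * H) ⟨y, hy⟩ = p ⟨y, hy⟩ * q ⟨y, hy⟩ - 1 := by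
        simp only [BoundedContinuousFunction.coe_sub, BoundedContinuousFunction.coe_mul,
          Pi.sub_apply, Pi.mul_apply, h1']
      rw [← h2]
      exact (p * q - G * H).norm_coe_le_norm _
  -- norm bounds
  have hεδ : ε ≤ δ/16 := min_le_left _ _
  have hεK : ε ≤ 1/(4*K) := min_le_right _ _
  have hpF : ‖p - F‖ ≤ 5*δ/16 := by
    have h1 : p - F = (p - G) + (G - F) := by abel
    have : ‖p - F‖ ≤ ‖p - G‖ + ‖G - F‖ := by
      rw [h1]; exact norm_add_le _ _
    linarith
  have hpn : ‖p‖ ≤ 2*C := by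
    have h1 : ‖p‖ ≤ ‖p - F‖ + ‖F‖ := by
      calc ‖p‖ = ‖(p - F) + F‖ := by rw [sub_add_cancel]
        _ ≤ ‖p - F‖ + ‖F‖ := norm_add_le _ _
    linarith
  have hqn : ‖q‖ ≤ 4/(3*δ) + ε := by
    have : ‖q‖ ≤ ‖q - H‖ + ‖H‖ := by
      calc ‖q‖ = ‖(q - H) + H‖ := by rw [sub_add_cancel]
        _ ≤ ‖q - H‖ + ‖H‖ := norm_add_le _ _
    linarith
  have hpq : ‖p * q - G * H‖ ≤ 2*C*ε + (4/(3*δ))*ε := by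
    have h1 : p * q - G * H = p * (q - H) + (p - G) * H := by ring
    calc ‖p * q - G * H‖ = ‖p * (q - H) + (p - G) * H‖ := by rw [h1]
      _ ≤ ‖p * (q - H)‖ + ‖(p - G) * H‖ := norm_add_le _ _
      _ ≤ ‖p‖ * ‖q - H‖ + ‖p - G‖ * ‖H‖ := by
          gcongr <;> [exact norm_mul_le _ _; exact norm_mul_le _ _]
      _ ≤ 2*C*ε + (4/(3*δ))*ε := by
          have := norm_nonneg (q - H); have := norm_nonneg (p - G)
          have hC0 : (0:ℝ) ≤ C := le_trans hδpos.le hδC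
          nlinarith [norm_nonneg p, norm_nonneg H]
  -- final contradiction
  have hone : (1:ℝ) ≤ ‖p0 * q0 - 1‖ + ‖p0‖ * ‖q0‖ := by
    have : (1:ℂ) = (1 - p0 * q0) + p0 * q0 := by ring
    calc (1:ℝ) = ‖(1:ℂ)‖ := by simp
      _ = ‖(1 - p0 * q0) + p0 * q0‖ := by rw [← this]
      _ ≤ ‖1 - p0 * q0‖ + ‖p0 * q0‖ := norm_add_le _ _
      _ = ‖p0 * q0 - 1‖ + ‖p0‖ * ‖q0‖ := by rw [norm_sub_rev, norm_mul]
  have hmain : ‖p0‖ * ‖q0‖ ≤ (5*δ/16) * (4/(3*δ) + ε) := by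
    apply mul_le_mul (le_trans hA1 hpF) (le_trans hA2 hqn) (norm_nonneg _) (by positivity)
  have hfrac : (5*δ/16) * (4/(3*δ)) = 5/12 := by
    rw [div_mul_div_comm, div_eq_div_iff (by positivity) (by norm_num : (12:ℝ) ≠ 0)]
    ring
  have hεK' : K * ε ≤ 1/4 := by
    have hK0 : K ≠ 0 := ne_of_gt hKpos
    calc K * ε ≤ K * (1/(4*K)) := mul_le_mul_of_nonneg_left hεK (le_of_lt hKpos)
      _ = 1/4 := by field_simp
  have : (1:ℝ) ≤ 2*C*ε + (4/(3*δ))*ε + (5*δ/16)*ε + 5/12 := by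
    have h5 : (5*δ/16) * (4/(3*δ) + ε) = 5/12 + (5*δ/16)*ε := by
      rw [mul_add, hfrac]
    nlinarith [hone, hA3, hpq, hmain]
  nlinarith [this, hεK', hεpos]

/-- Let `Y` be a nonempty compact subset of `ℂ²` such that `P(Y)` has dense invertibles
and `(0,0)` lies in the polynomial hull of `Y`.  Then for every `a ∈ ℂ` there is a point
`(z, w) ∈ Y` with `z = a * w`. -/
theorem stmt10 (Y : Set (ℂ × ℂ)) (hne : Y.Nonempty) (hcpt : IsCompact Y)
    (hinv : Dense {f : PY Y | IsUnit f})
    (h0 : ((0 : ℂ), (0 : ℂ)) ∈ polyHull Y) :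
    ∀ a : ℂ, ∃ y ∈ Y, y.1 = a * y.2 :=
  stmt10' Y hne hcpt hinv h0
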